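/- arXiv:2308.16425 — 3 statements merged into one kernel-verified Lean document; each statement's English description precedes it below -/
import Mathlib

section
/- The function f : [-1,1] → ℝ defined by f(x) = (√(1−x²) + (π − arccos x)·x)/π is twice differentiable on (−1,1) with f″(x) = 1/(π·√(1−x²)) > 0, hence f is strictly convex on (−1,1); moreover f(x) ≥ x for all x ∈ [−1,1], with equality if and only if x = 1. -/
open Real Set

/-- The dual kernel of the normalized ReLU activation `φ(x) = √2·max(x,0)`. -/
noncomputable def fDual (x : ℝ) : ℝ :=
  (Real.sqrt (1 - x ^ 2) + (Real.pi - Real.arccos x) * x) / Real.pi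

lemma hasDerivAt_fDual {x : ℝ} (hx : x ∈ Set.Ioo (-1 : ℝ) 1) :
    HasDerivAt fDual ((Real.pi - Real.arccos x) / Real.pi) x := by
  obtain ⟨h1, h2⟩ := hx
  have hne1 : x ≠ -1 := ne_of_gt h1
  have hne2 : x ≠ 1 := ne_of_lt h2
  have hpos : 0 < 1 - x ^ 2 := by nlinarith
  have hsq : Real.sqrt (1 - x ^ 2) ≠ 0 := (Real.sqrt_pos.2 hpos).ne'
  have hinner : HasDerivAt (fun x : ℝ => 1 - x ^ 2) (-(2 * x)) x := by
    simpa using ((hasDerivAt_pow 2 x).const_sub 1)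
  have hs : HasDerivAt (fun x : ℝ => Real.sqrt (1 - x ^ 2))
      (1 / (2 * Real.sqrt (1 - x ^ 2)) * -(2 * x)) x :=
    (Real.hasDerivAt_sqrt hpos.ne').comp x hinner
  have ha : HasDerivAt (fun x : ℝ => (Real.pi - Real.arccos x) * x)
      ((1 / Real.sqrt (1 - x ^ 2)) * x + (Real.pi - Real.arccos x)) x := by
    have := ((Real.hasDerivAt_arccos hne1 hne2).const_sub Real.pi).mul (hasDerivAt_id x)
    exact this.congr_deriv (by simp)
  have hsum := (hs.add ha).div_const Real.pi
  exact hsum.congr_deriv (by field_simp; ring)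

lemma derivfDual_eq {x : ℝ} (hx : x ∈ Set.Ioo (-1 : ℝ) 1) :
    deriv fDual x = (Real.pi - Real.arccos x) / Real.pi :=
  (hasDerivAt_fDual hx).deriv

lemma hasDerivAt_deriv_fDual {x : ℝ} (hx : x ∈ Set.Ioo (-1 : ℝ) 1) :
    HasDerivAt (deriv fDual) (1 / (Real.pi * Real.sqrt (1 - x ^ 2))) x := by
  obtain ⟨h1, h2⟩ := hx
  have hg : HasDerivAt (fun x : ℝ => (Real.pi - Real.arccos x) / Real.pi)
      (1 / (Real.pi * Real.sqrt (1 - x ^ 2))) x := by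
    have := ((Real.hasDerivAt_arccos (ne_of_gt h1) (ne_of_lt h2)).const_sub
      Real.pi).div_const Real.pi
    have hπ := Real.pi_ne_zero
    exact this.congr_deriv (by field_simp)
  refine hg.congr_of_eventuallyEq ?_
  filter_upwards [Ioo_mem_nhds h1 h2] with y hy
  exact derivfDual_eq hy

lemma second_pos {x : ℝ} (hx : x ∈ Set.Ioo (-1 : ℝ) 1) :
    0 < 1 / (Real.pi * Real.sqrt (1 - x ^ 2)) := by
  obtain ⟨h1, h2⟩ := hx
  have hpos : 0 < 1 - x ^ 2 := by nlinarith
  exact div_pos one_pos (mul_pos Real.pi_pos (Real.sqrt_pos.2 hpos))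

lemma key {x : ℝ} (h1 : -1 ≤ x) (h2 : x < 1) :
    x * Real.arccos x < Real.sqrt (1 - x ^ 2) := by
  rcases le_or_gt x 0 with hx0 | hx0
  · rcases eq_or_lt_of_le h1 with h | h
    · rw [← h]; norm_num [Real.arccos_neg_one]
      nlinarith [Real.pi_pos]
    · have hpos : 0 < 1 - x ^ 2 := by nlinarith
      have : x * Real.arccos x ≤ 0 :=
        mul_nonpos_of_nonpos_of_nonneg hx0 (Real.arccos_nonneg x)
      exact lt_of_le_of_lt this (Real.sqrt_pos.2 hpos)
  · set θ := Real.arccos x with hθ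
    have hθpos : 0 < θ := Real.arccos_pos.2 h2
    have hθlt : θ < Real.pi / 2 := Real.arccos_lt_pi_div_two.2 hx0
    have htan : θ < Real.tan θ := Real.lt_tan hθpos hθlt
    have hcos : Real.cos θ = x := Real.cos_arccos h1 h2.le
    have hsin : Real.sin θ = Real.sqrt (1 - x ^ 2) := Real.sin_arccos x
    have hcpos : 0 < Real.cos θ := by rw [hcos]; exact hx0
    have := (mul_lt_mul_of_pos_right htan hcpos)
    rw [Real.tan_eq_sin_div_cos, div_mul_cancel₀ _ hcpos.ne'] at this
    calc x * θ = θ * Real.cos θ := by rw [hcos]; ring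
    _ < Real.sin θ := this
    _ = Real.sqrt (1 - x ^ 2) := hsin

theorem stmt_1 :
    (∀ x ∈ Set.Ioo (-1 : ℝ) 1,
      HasDerivAt (deriv fDual) (1 / (Real.pi * Real.sqrt (1 - x ^ 2))) x ∧
      0 < 1 / (Real.pi * Real.sqrt (1 - x ^ 2))) ∧
    StrictConvexOn ℝ (Set.Ioo (-1 : ℝ) 1) fDual ∧
    (∀ x ∈ Set.Icc (-1 : ℝ) 1, x ≤ fDual x ∧ (fDual x = x ↔ x = 1)) := by
  have hπ : (Real.pi : ℝ) ≠ 0 := Real.pi_ne_zero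
  refine ⟨fun x hx => ⟨hasDerivAt_deriv_fDual hx, second_pos hx⟩, ?_, ?_⟩
  · apply strictConvexOn_of_deriv2_pos (convex_Ioo _ _)
    · apply ContinuousOn.div_const
      exact ((Real.continuous_sqrt.comp (by continuity)).add
        ((continuous_const.sub Real.continuous_arccos).mul continuous_id)).continuousOn
    · intro x hx
      rw [interior_Ioo] at hx
      have := (hasDerivAt_deriv_fDual hx).deriv
      simpa [Function.iterate_succ, this] using second_pos hx
  · intro x ⟨h1, h2⟩
    have hiff : fDual x = x ↔ Real.sqrt (1 - x ^ 2) = x * Real.arccos x := by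
      unfold fDual
      rw [div_eq_iff hπ]
      constructor <;> intro h <;> nlinarith
    rcases eq_or_lt_of_le h2 with h | h
    · subst h
      constructor
      · unfold fDual
        rw [show (1:ℝ) - 1 ^ 2 = 0 by ring, Real.sqrt_zero, Real.arccos_one]
        rw [le_div_iff₀ Real.pi_pos]
        ring_nf
        simp
      · simp [hiff, Real.arccos_one]
    · have hk := key h1 h
      exact ⟨by unfold fDual; rw [le_div_iff₀ Real.pi_pos]; nlinarith [hk],
        by simp only [hiff]; constructor <;> intro hh <;> [linarith; linarith]⟩
end

section
/- Let φ(x) = √2·max(x,0) be the normalized ReLU and let ρ ∈ [−1,1]. If z₁, z₂ are independent standard Gaussian random variables and one sets u = z₁ and v = ρ·z₁ + √(1−ρ²)·z₂ (so that (u,v) is a centered Gaussian pair with unit variances and correlation ρ), then E[φ(u)·φ(v)] = (√(1−ρ²) + (π − arccos ρ)·ρ)/π. In particular E[φ(z₁)²] = 1. -/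
open MeasureTheory ProbabilityTheory Real
open scoped NNReal ENNReal
open Set Filter

/-- The normalized ReLU activation. -/
noncomputable def normReLU (x : ℝ) : ℝ := Real.sqrt 2 * max x 0


noncomputable def npdf (x : ℝ) : ℝ≥0 := ⟨gaussianPDFReal 0 1 x, gaussianPDFReal_nonneg 0 1 x⟩

lemma npdf_meas : Measurable npdf := by
  apply Measurable.subtype_mk
  exact measurable_gaussianPDFReal 0 1

lemma npdf_coe (x : ℝ) : ((npdf x : ℝ≥0) : ℝ) = (Real.sqrt (2 * π))⁻¹ * Real.exp (-x ^ 2 / 2) := by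
  simp [npdf, gaussianPDFReal]
  rfl

lemma gauss_eq : gaussianReal 0 1 = (volume : Measure ℝ).withDensity (fun x => (npdf x : ℝ≥0∞)) := by
  rw [gaussianReal_of_var_ne_zero _ one_ne_zero]
  congr 1
  funext x
  rw [gaussianPDF]
  exact ENNReal.ofReal_eq_coe_nnreal _

lemma prodgauss : (gaussianReal 0 1).prod (gaussianReal 0 1)
    = (volume : Measure (ℝ × ℝ)).withDensity (fun p => ((npdf p.1 * npdf p.2 : ℝ≥0) : ℝ≥0∞)) := by
  refine (Measure.prod_eq fun s t hs ht => ?_)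
  rw [withDensity_apply _ (hs.prod ht)]
  rw [Measure.volume_eq_prod, ← Measure.prod_restrict]
  have : ∀ p : ℝ × ℝ, ((npdf p.1 * npdf p.2 : ℝ≥0) : ℝ≥0∞) = (npdf p.1 : ℝ≥0∞) * (npdf p.2 : ℝ≥0∞) := by
    intro p; push_cast; ring
  rw [lintegral_congr this, lintegral_prod_mul (npdf_meas.coe_nnreal_ennreal.aemeasurable) (npdf_meas.coe_nnreal_ennreal.aemeasurable)]
  rw [gauss_eq, withDensity_apply _ hs, withDensity_apply _ ht]

lemma cos_mul_cos' (θ β : ℝ) : cos θ * cos (θ - β) = (cos (2*θ - β) + cos β) / 2 := by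
  have h1 : cos (2*θ - β) = cos (θ + (θ - β)) := by ring_nf
  rw [h1, cos_add, cos_sub, sin_sub]
  linear_combination (cos β / 2) * sin_sq_add_cos_sq θ

lemma angular_deriv (β θ : ℝ) :
    HasDerivAt (fun t => sin (2*t - β) / 4 + t * cos β / 2) (cos θ * cos (θ - β)) θ := by
  have h1 : HasDerivAt (fun t : ℝ => 2*t - β) 2 θ := by
    simpa using ((hasDerivAt_id θ).const_mul (2:ℝ)).sub_const β
  have h2 := (h1.sin).div_const 4
  have h3 : HasDerivAt (fun t : ℝ => t * cos β / 2) (cos β / 2) θ := by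
    simpa using ((hasDerivAt_id θ).mul_const (cos β)).div_const 2
  have := h2.add h3
  exact this.congr_deriv (by rw [cos_mul_cos']; ring)

lemma angular_val (β : ℝ) (hβ0 : 0 ≤ β) (hβπ : β ≤ π) :
    ∫ θ in Ioo (β - π/2) (π/2), cos θ * cos (θ - β)
      = (sin β + (π - β) * cos β) / 2 := by
  have hle : β - π/2 ≤ π/2 := by linarith
  rw [← integral_Ioc_eq_integral_Ioo, ← intervalIntegral.integral_of_le hle]
  rw [intervalIntegral.integral_eq_sub_of_hasDerivAt
    (fun θ _ => angular_deriv β θ)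
    (((continuous_cos.mul (by continuity)).intervalIntegrable _ _))]
  have e1 : (2 * (π/2) - β) = π - β := by ring
  have e2 : (2 * (β - π/2) - β) = β - π := by ring
  rw [e1, e2, sin_pi_sub]
  have : sin (β - π) = - sin β := by
    rw [show β - π = -(π - β) by ring, sin_neg, sin_pi_sub]
  rw [this]
  ring

lemma maxmax_eq (β : ℝ) (hβ0 : 0 ≤ β) (hβπ : β ≤ π) {θ : ℝ} (hθ : θ ∈ Ioo (-π) π) :
    max (cos θ) 0 * max (cos (θ - β)) 0
      = (Ioo (β - π/2) (π/2)).indicator (fun t => cos t * cos (t - β)) θ := by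
  by_cases h : θ ∈ Ioo (β - π/2) (π/2)
  · rw [indicator_of_mem h]
    have h1 : 0 ≤ cos θ := by
      apply cos_nonneg_of_mem_Icc
      constructor <;> [linarith [h.1]; linarith [h.2]]
    have h2 : 0 ≤ cos (θ - β) := by
      apply cos_nonneg_of_mem_Icc
      constructor <;> [linarith [h.1]; linarith [h.2]]
    rw [max_eq_left h1, max_eq_left h2]
  · rw [indicator_of_notMem h]
    rw [mem_Ioo, not_and_or, not_lt, not_lt] at h
    rcases h with h | h
    · -- θ ≤ β - π/2
      by_cases h' : β - θ ≤ π + π / 2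
      · have : cos (θ - β) ≤ 0 := by
          rw [show θ - β = -(β - θ) by ring, cos_neg]
          exact cos_nonpos_of_pi_div_two_le_of_le (by linarith) h'
        rw [max_eq_right this, mul_zero]
      · have : cos θ ≤ 0 := by
          rw [← cos_neg]
          exact cos_nonpos_of_pi_div_two_le_of_le (by linarith) (by linarith [hθ.1])
        rw [max_eq_right this, zero_mul]
    · -- π/2 ≤ θ
      have : cos θ ≤ 0 :=
        cos_nonpos_of_pi_div_two_le_of_le h (by linarith [hθ.2])
      rw [max_eq_right this, zero_mul]

lemma angular_full (β : ℝ) (hβ0 : 0 ≤ β) (hβπ : β ≤ π) :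
    ∫ θ in Ioo (-π) π, max (cos θ) 0 * max (cos (θ - β)) 0
      = (sin β + (π - β) * cos β) / 2 := by
  rw [setIntegral_congr_fun measurableSet_Ioo (fun θ hθ => maxmax_eq β hβ0 hβπ hθ)]
  rw [setIntegral_indicator measurableSet_Ioo]
  rw [inter_eq_self_of_subset_right (Ioo_subset_Ioo (by linarith [pi_pos]) (by linarith [pi_pos]))]
  exact angular_val β hβ0 hβπ

lemma radial_integrable : IntegrableOn (fun r : ℝ => r ^ 3 * exp (-r^2/2)) (Ioi 0) := by
  have h := (integrable_rpow_mul_exp_neg_mul_sq (b := 1/2) (by norm_num)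
    (by norm_num : (-1:ℝ) < 3)).integrableOn (s := Ioi (0:ℝ))
  apply h.congr_fun ?_ measurableSet_Ioi
  intro x hx
  show x ^ (3:ℝ) * rexp (-(1/2) * x ^ 2) = x ^ (3:ℕ) * rexp (-x ^ 2 / 2)
  rw [← rpow_natCast x 3]
  norm_num
  left
  ring_nf

lemma radial_deriv (r : ℝ) :
    HasDerivAt (fun t : ℝ => -(t^2 + 2) * exp (-t^2/2)) (r ^ 3 * exp (-r^2/2)) r := by
  have h1 : HasDerivAt (fun t : ℝ => -(t^2 + 2)) (-(2*r)) r := by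
    exact (((hasDerivAt_pow 2 r).add_const (2:ℝ)).neg).congr_deriv (by norm_num)
  have h2 : HasDerivAt (fun t : ℝ => -t^2/2) (-r) r := by
    have h := ((hasDerivAt_pow 2 r).neg).div_const 2
    exact h.congr_deriv (by norm_num; ring)
  have h3 := h2.exp
  have := h1.mul h3
  exact this.congr_deriv (by ring)

lemma radial_tendsto : Tendsto (fun t : ℝ => -(t^2 + 2) * exp (-t^2/2)) atTop (nhds 0) := by
  have key : Tendsto (fun t : ℝ => (t^2 + 2) * exp (-t^2/2)) atTop (nhds 0) := by
    have h1 : Tendsto (fun x : ℝ => (2 * x + 2) * exp (-x)) atTop (nhds 0) := by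
      have ha := tendsto_pow_mul_exp_neg_atTop_nhds_zero 1
      have hb := tendsto_pow_mul_exp_neg_atTop_nhds_zero 0
      have := (ha.const_mul 2).add (hb.const_mul 2)
      simp only [pow_one, pow_zero, one_mul] at this
      exact Filter.Tendsto.congr (fun x => by ring) ((by simpa using this : Tendsto (fun x:ℝ => 2*(x*rexp (-x)) + 2*rexp (-x)) atTop (nhds 0)))
    have h2 : Tendsto (fun t : ℝ => t^2/2) atTop atTop := by
      apply Tendsto.atTop_div_const (by norm_num)
      exact tendsto_pow_atTop (by norm_num)
    have := h1.comp h2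
    refine this.congr fun t => ?_
    simp only [Function.comp]
    rw [show -(t^2/2) = -t^2/2 by ring]
    ring_nf
  have := key.neg
  simp only [neg_zero] at this
  exact this.congr fun t => by ring
lemma radial_val : ∫ r in Ioi (0:ℝ), r ^ 3 * exp (-r^2/2) = 2 := by
  have := integral_Ioi_of_hasDerivAt_of_tendsto (f := fun t : ℝ => -(t^2 + 2) * exp (-t^2/2))
    (f' := fun r : ℝ => r ^ 3 * exp (-r^2/2)) (a := 0) ?_ (fun x _ => radial_deriv x)
    radial_integrable radial_tendsto
  · rw [this]; norm_num
  · exact Continuous.continuousWithinAt (by fun_prop)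


lemma pointwise (β : ℝ) {r θ : ℝ} (hr : 0 < r) :
    r • ((npdf (r * cos θ) * npdf (r * sin θ) : ℝ≥0) •
        (normReLU (r * cos θ) * normReLU (cos β * (r * cos θ) + sin β * (r * sin θ))))
      = (r ^ 3 * exp (-r^2/2)) * (π⁻¹ * (max (cos θ) 0 * max (cos (θ - β)) 0)) := by
  rw [NNReal.smul_def, smul_eq_mul, smul_eq_mul, NNReal.coe_mul, npdf_coe, npdf_coe]
  simp only [normReLU]
  have hmax1 : max (r * cos θ) 0 = r * max (cos θ) 0 := by
    rw [mul_max_of_nonneg _ _ hr.le, mul_zero]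
  have hmax2 : cos β * (r * cos θ) + sin β * (r * sin θ) = r * cos (θ - β) := by
    rw [cos_sub]; ring
  have hmax3 : max (r * cos (θ - β)) 0 = r * max (cos (θ - β)) 0 := by
    rw [mul_max_of_nonneg _ _ hr.le, mul_zero]
  rw [hmax1, hmax2, hmax3]
  have hexp : exp (-(r * cos θ)^2/2) * exp (-(r * sin θ)^2/2) = exp (-r^2/2) := by
    rw [← exp_add]; congr 1; nlinarith [sin_sq_add_cos_sq θ]
  have hT : Real.sqrt 2 * Real.sqrt 2 = 2 := mul_self_sqrt (by norm_num)
  have hS : Real.sqrt (2*π) * Real.sqrt (2*π) = 2*π := mul_self_sqrt (by positivity)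
  have hS0 : Real.sqrt (2*π) ≠ 0 := by positivity
  have hπ : (π:ℝ) ≠ 0 := pi_ne_zero
  have hT' : Real.sqrt 2 ^ 2 = 2 := sq_sqrt (by norm_num)
  have hπ' : Real.sqrt π ^ 2 = π := sq_sqrt pi_pos.le
  have hinv : (Real.sqrt (2*π))⁻¹ * (Real.sqrt (2*π))⁻¹ = (2*π)⁻¹ := by rw [← mul_inv, hS]
  linear_combination
    (r^3 * ((max (cos θ) 0)*(max (cos (θ-β)) 0)) * (exp (-(r * cos θ)^2/2) * exp (-(r * sin θ)^2/2) * Real.sqrt 2 * Real.sqrt 2)) * hinv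
    + (r^3 * ((max (cos θ) 0)*(max (cos (θ-β)) 0)) * (2*π)⁻¹ * Real.sqrt 2 * Real.sqrt 2) * hexp
    + (r^3 * ((max (cos θ) 0)*(max (cos (θ-β)) 0)) * (2*π)⁻¹ * exp (-r^2/2)) * hT

lemma main_integral (β : ℝ) (hβ0 : 0 ≤ β) (hβπ : β ≤ π) :
    (∫ z : ℝ × ℝ, normReLU z.1 * normReLU (cos β * z.1 + sin β * z.2)
        ∂((gaussianReal 0 1).prod (gaussianReal 0 1)))
      = (sin β + (π - β) * cos β) / π := by
  have hm : Measurable (fun p : ℝ × ℝ => npdf p.1 * npdf p.2) :=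
    (npdf_meas.comp measurable_fst).mul (npdf_meas.comp measurable_snd)
  rw [prodgauss, integral_withDensity_eq_integral_smul hm]
  rw [← integral_comp_polarCoord_symm]
  have htarget : polarCoord.target = Set.Ioi (0:ℝ) ×ˢ Set.Ioo (-π) π := rfl
  rw [htarget]
  have hcong : ∀ p ∈ (Ioi (0:ℝ) ×ˢ Ioo (-π) π),
      p.1 • ((npdf (polarCoord.symm p).1 * npdf (polarCoord.symm p).2 : ℝ≥0) •
        (normReLU (polarCoord.symm p).1 *
          normReLU (cos β * (polarCoord.symm p).1 + sin β * (polarCoord.symm p).2)))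
      = (fun q : ℝ × ℝ =>
          (q.1 ^ 3 * exp (-q.1^2/2)) * (π⁻¹ * (max (cos q.2) 0 * max (cos (q.2 - β)) 0))) p := by
    intro p hp
    have hsymm : polarCoord.symm p = (p.1 * cos p.2, p.1 * sin p.2) := rfl
    rw [hsymm]
    exact pointwise β hp.1
  rw [setIntegral_congr_fun (measurableSet_Ioi.prod measurableSet_Ioo) hcong]
  rw [Measure.volume_eq_prod]
  rw [setIntegral_prod_mul (fun r : ℝ => r ^ 3 * exp (-r^2/2))
    (fun θ : ℝ => π⁻¹ * (max (cos θ) 0 * max (cos (θ - β)) 0)) _ _]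
  rw [radial_val, integral_const_mul, angular_full β hβ0 hβπ]
  field_simp

theorem stmt_2 (ρ : ℝ) (hρ : ρ ∈ Set.Icc (-1 : ℝ) 1) :
    (∫ z : ℝ × ℝ,
        normReLU z.1 * normReLU (ρ * z.1 + Real.sqrt (1 - ρ ^ 2) * z.2)
        ∂((gaussianReal 0 1).prod (gaussianReal 0 1)))
      = (Real.sqrt (1 - ρ ^ 2) + (Real.pi - Real.arccos ρ) * ρ) / Real.pi ∧
    (∫ z : ℝ, normReLU z ^ 2 ∂(gaussianReal 0 1)) = 1 := by
  constructor
  · have h := main_integral (arccos ρ) (arccos_nonneg ρ) (arccos_le_pi ρ)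
    rw [sin_arccos, cos_arccos hρ.1 hρ.2] at h
    exact h
  · have h := main_integral 0 le_rfl pi_pos.le
    simp only [cos_zero, sin_zero, one_mul, zero_mul, add_zero, sub_zero] at h
    rw [show ((0:ℝ) + π * 1) / π = 1 by field_simp; ring] at h
    have hmap : (∫ z : ℝ, normReLU z ^ 2 ∂(gaussianReal 0 1))
        = ∫ z : ℝ × ℝ, normReLU z.1 ^ 2 ∂((gaussianReal 0 1).prod (gaussianReal 0 1)) := by
      have h1 : Measure.map Prod.fst ((gaussianReal 0 1).prod (gaussianReal 0 1))
          = gaussianReal 0 1 := by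
        rw [Measure.map_fst_prod]
        simp
      have hc : Continuous normReLU := continuous_const.mul (continuous_id.max continuous_const)
      conv_lhs => rw [← h1]
      exact integral_map measurable_fst.aemeasurable
        (hc.pow 2).measurable.aestronglyMeasurable
    rw [hmap]
    rw [← h]
    congr 1
    funext z
    ring
end

section
/- Fix σ_a ∈ ℝ with 0 < σ_a² < 1 and let f(x) = (√(1−x²) + (π − arccos x)·x)/π. Then for every t ∈ [−1,1], the map F_t(x) = σ_a²·f(x) + (1−σ_a²)·t maps [−1,1] into [−1,1] and is a contraction with Lipschitz constant at most σ_a² < 1; consequently there exists a unique x ∈ [−1,1] with x = σ_a²·f(x) + (1−σ_a²)·t. -/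
open Real Set

lemma fDual_continuous : Continuous fDual := by
  unfold fDual
  exact ((Real.continuous_sqrt.comp (continuous_const.sub (continuous_pow 2))).add
    ((continuous_const.sub Real.continuous_arccos).mul continuous_id)).div_const _

lemma fDual_hasDerivAt {x : ℝ} (hx : x ∈ Set.Ioo (-1:ℝ) 1) :
    HasDerivAt fDual ((Real.pi - Real.arccos x) / Real.pi) x := by
  have h1 : x ≠ -1 := by rintro rfl; exact absurd hx.1 (lt_irrefl _)
  have h2 : x ≠ 1 := by rintro rfl; exact absurd hx.2 (lt_irrefl _)
  have hx2 : 0 < 1 - x ^ 2 := by nlinarith [hx.1, hx.2]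
  have hs : 0 < Real.sqrt (1 - x ^ 2) := Real.sqrt_pos.2 hx2
  have hA : HasDerivAt (fun y : ℝ => 1 - y ^ 2) (-(2 * x)) x := by
    exact ((hasDerivAt_const x (1:ℝ)).sub (hasDerivAt_pow 2 x)).congr_deriv (by norm_num)
  have hB : HasDerivAt (fun y : ℝ => Real.sqrt (1 - y ^ 2))
      (1 / (2 * Real.sqrt (1 - x ^ 2)) * (-(2 * x))) x :=
    (Real.hasDerivAt_sqrt hx2.ne').comp x hA
  have hC : HasDerivAt Real.arccos (-(1 / Real.sqrt (1 - x ^ 2))) x :=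
    Real.hasDerivAt_arccos h1 h2
  have hD : HasDerivAt (fun y : ℝ => (Real.pi - Real.arccos y) * y)
      ((0 - -(1 / Real.sqrt (1 - x ^ 2))) * x + (Real.pi - Real.arccos x) * 1) x :=
    ((hasDerivAt_const x Real.pi).sub hC).mul (hasDerivAt_id x)
  have := (hB.add hD).div_const Real.pi
  refine this.congr_deriv ?_
  have hsne : Real.sqrt (1 - x ^ 2) ≠ 0 := hs.ne'
  field_simp
  ring

lemma fDual_neg_one : fDual (-1) = 0 := by
  simp [fDual]

lemma fDual_one : fDual 1 = 1 := by
  simp [fDual, Real.pi_ne_zero]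

lemma fDual_mono : MonotoneOn fDual (Set.Icc (-1:ℝ) 1) := by
  apply monotoneOn_of_deriv_nonneg (convex_Icc _ _) fDual_continuous.continuousOn
  · rw [interior_Icc]
    exact fun x hx => (fDual_hasDerivAt hx).differentiableAt.differentiableWithinAt
  · rw [interior_Icc]
    intro x hx
    rw [(fDual_hasDerivAt hx).deriv]
    exact div_nonneg (sub_nonneg.2 (Real.arccos_le_pi x)) Real.pi_pos.le

lemma id_sub_fDual_mono : MonotoneOn (fun x => x - fDual x) (Set.Icc (-1:ℝ) 1) := by
  apply monotoneOn_of_deriv_nonneg (convex_Icc _ _)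
    (continuous_id.sub fDual_continuous).continuousOn
  · rw [interior_Icc]
    exact fun x hx => ((hasDerivAt_id x).sub (fDual_hasDerivAt hx)).differentiableAt.differentiableWithinAt
  · rw [interior_Icc]
    intro x hx
    rw [((hasDerivAt_id x).sub (fDual_hasDerivAt hx)).deriv]
    have h1 := Real.arccos_nonneg x
    have h2 := Real.pi_pos
    rw [sub_div, div_self h2.ne']
    simp only [sub_sub_cancel]
    positivity

lemma fDual_mem {x : ℝ} (hx : x ∈ Set.Icc (-1:ℝ) 1) : fDual x ∈ Set.Icc (0:ℝ) 1 := by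
  constructor
  · have := fDual_mono (Set.left_mem_Icc.2 (by norm_num)) hx hx.1
    rwa [fDual_neg_one] at this
  · have := fDual_mono hx (Set.right_mem_Icc.2 (by norm_num)) hx.2
    rwa [fDual_one] at this

lemma fDual_lip {x y : ℝ} (hx : x ∈ Set.Icc (-1:ℝ) 1) (hy : y ∈ Set.Icc (-1:ℝ) 1) :
    |fDual x - fDual y| ≤ |x - y| := by
  have a1 : x - y ≤ |x - y| := le_abs_self _
  have a2 : y - x ≤ |x - y| := by rw [abs_sub_comm]; exact le_abs_self _
  rw [abs_sub_le_iff]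
  rcases le_total x y with h | h
  · have h1 : fDual x ≤ fDual y := fDual_mono hx hy h
    have h2 : x - fDual x ≤ y - fDual y := id_sub_fDual_mono hx hy h
    constructor <;> linarith
  · have h1 : fDual y ≤ fDual x := fDual_mono hy hx h
    have h2 : y - fDual y ≤ x - fDual x := id_sub_fDual_mono hy hx h
    constructor <;> linarith

theorem stmt_4 (σa : ℝ) (hσ0 : 0 < σa ^ 2) (hσ1 : σa ^ 2 < 1)
    (t : ℝ) (ht : t ∈ Set.Icc (-1 : ℝ) 1) :
    Set.MapsTo (fun x => σa ^ 2 * fDual x + (1 - σa ^ 2) * t)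
      (Set.Icc (-1 : ℝ) 1) (Set.Icc (-1 : ℝ) 1) ∧
    LipschitzOnWith (Real.toNNReal (σa ^ 2))
      (fun x => σa ^ 2 * fDual x + (1 - σa ^ 2) * t) (Set.Icc (-1 : ℝ) 1) ∧
    (∃! x : ℝ, x ∈ Set.Icc (-1 : ℝ) 1 ∧ x = σa ^ 2 * fDual x + (1 - σa ^ 2) * t) := by
  obtain ⟨ht1, ht2⟩ := ht
  have hmaps : Set.MapsTo (fun x => σa ^ 2 * fDual x + (1 - σa ^ 2) * t)
      (Set.Icc (-1 : ℝ) 1) (Set.Icc (-1 : ℝ) 1) := by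
    intro x hx
    have hf := fDual_mem hx
    constructor
    · simp only
      nlinarith [hf.1, hf.2]
    · simp only
      nlinarith [hf.1, hf.2]
  have hlip : LipschitzOnWith (Real.toNNReal (σa ^ 2))
      (fun x => σa ^ 2 * fDual x + (1 - σa ^ 2) * t) (Set.Icc (-1 : ℝ) 1) := by
    apply LipschitzOnWith.of_dist_le_mul
    intro x hx y hy
    simp only [Real.dist_eq, Real.coe_toNNReal _ hσ0.le]
    have heq : σa ^ 2 * fDual x + (1 - σa ^ 2) * t - (σa ^ 2 * fDual y + (1 - σa ^ 2) * t)
        = σa ^ 2 * (fDual x - fDual y) := by ring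
    rw [heq, abs_mul, abs_of_nonneg hσ0.le]
    exact mul_le_mul_of_nonneg_left (fDual_lip hx hy) hσ0.le
  refine ⟨hmaps, hlip, ?_⟩
  -- existence via IVT
  set F : ℝ → ℝ := fun x => σa ^ 2 * fDual x + (1 - σa ^ 2) * t with hF
  have hFdef : ∀ z, F z = σa ^ 2 * fDual z + (1 - σa ^ 2) * t := fun z => rfl
  have hc : ContinuousOn (fun x => x - F x) (Set.Icc (-1:ℝ) 1) :=
    (continuous_id.sub ((continuous_const.mul fDual_continuous).add continuous_const)).continuousOn
  have hm1 := hmaps (Set.left_mem_Icc.2 (by norm_num))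
  have hp1 := hmaps (Set.right_mem_Icc.2 (by norm_num))
  have h0 : (0:ℝ) ∈ Set.Icc ((-1:ℝ) - F (-1)) (1 - F 1) := by
    constructor
    · have := hm1.1; linarith
    · have := hp1.2; linarith
  obtain ⟨x, hx, hx0⟩ := intermediate_value_Icc (by norm_num : (-1:ℝ) ≤ 1) hc h0
  have hxeq : x = F x := by simp only at hx0; linarith
  refine ⟨x, ⟨hx, by rw [← hFdef x]; exact hxeq⟩, ?_⟩
  rintro y ⟨hy, hyeq⟩
  rw [← hFdef y] at hyeq
  have hd : |y - x| ≤ σa ^ 2 * |y - x| := by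
    calc |y - x| = |F y - F x| := by rw [← hyeq, ← hxeq]
    _ = σa ^ 2 * |fDual y - fDual x| := by
        rw [show F y - F x = σa ^ 2 * (fDual y - fDual x) by simp only [hFdef]; ring,
          abs_mul, abs_of_nonneg hσ0.le]
    _ ≤ σa ^ 2 * |y - x| := mul_le_mul_of_nonneg_left (fDual_lip hy hx) hσ0.le
  have : |y - x| = 0 := by nlinarith [abs_nonneg (y - x)]
  have := abs_eq_zero.1 this
  linarith [sub_eq_zero.1 this]
end
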